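/- Let n be a real number and f(t) = t^2 * (1 + ln(n/t)). For every real x with 1 ≤ x and x + 1 ≤ n, we have f(1) + f(x) ≤ f(x+1). -/

import Mathlib

/-- For `f(t) = t^2 (1 + ln(n/t))`: if `1 ≤ x` and `x + 1 ≤ n`, then `f 1 + f x ≤ f (x+1)`. -/
theorem f_one_add (n : ℝ) (f : ℝ → ℝ)
    (hf : ∀ t : ℝ, f t = t ^ 2 * (1 + Real.log (n / t)))
    (x : ℝ) (hx : 1 ≤ x) (hxn : x + 1 ≤ n) :
    f 1 + f x ≤ f (x + 1) := by
  have hx0 : (0:ℝ) < x := by linarith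
  have hx1 : (0:ℝ) < x + 1 := by linarith
  have hn : (0:ℝ) < n := by linarith
  rw [hf, hf, hf, Real.log_div hn.ne' one_ne_zero, Real.log_div hn.ne' hx0.ne',
    Real.log_div hn.ne' hx1.ne', Real.log_one]
  have h1 : Real.log (x+1) ≤ x := by
    have := Real.log_le_sub_one_of_pos hx1; linarith
  have h2 : x ^ 2 * (Real.log (x+1) - Real.log x) ≤ x := by
    rw [← Real.log_div hx1.ne' hx0.ne']
    have hp : 0 < (x+1)/x := by positivity
    have h := Real.log_le_sub_one_of_pos hp
    have he : (x+1)/x - 1 = 1/x := by field_simp; ring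
    rw [he] at h
    calc x ^ 2 * Real.log ((x+1)/x) ≤ x ^ 2 * (1/x) := by
          exact mul_le_mul_of_nonneg_left h (by positivity)
      _ = x := by field_simp
  have h3 : Real.log (x+1) ≤ Real.log n := Real.log_le_log hx1 hxn
  nlinarith [h1, h2, h3, hx0.le]
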